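/- Let X be a stationary random set with locally finite perimeter such that the measure B ↦ E|D1_X|(B) is locally finite. Then E|D1_X| is a translation-invariant locally finite Borel measure on ℝ^d and hence equals \bar{P}(X)·H^d for a constant \bar{P}(X) ∈ [0,∞), i.e., E|D1_X|(B) = \bar{P}(X) H^d(B) for all Borel B. -/

import Mathlib

open MeasureTheory Metric Filter Bornology
open scoped ENNReal NNReal Topology Real symmDiff

noncomputable section

variable {V : Type*} [NormedAddCommGroup V] [InnerProductSpace ℝ V]
  [FiniteDimensional ℝ V] [MeasurableSpace V] [BorelSpace V]

/-- Divergence of a vector field, computed via an orthonormal basis. -/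
def divg (φ : V → V) (x : V) : ℝ :=
  ∑ i, (inner ℝ ((fderiv ℝ φ x) (stdOrthonormalBasis ℝ V i)) (stdOrthonormalBasis ℝ V i) : ℝ)

/-- Variation of `f` in a set `U` (De Giorgi's definition via test vector fields
supported in `U`), with respect to the intrinsic (Hausdorff) measure of `V`. -/
def varIn (f : V → ℝ) (U : Set V) : ℝ≥0∞ :=
  ⨆ φ : {φ : V → V // ContDiff ℝ 1 φ ∧ HasCompactSupport φ ∧ tsupport φ ⊆ U ∧ ∀ x, ‖φ x‖ ≤ 1},
    ENNReal.ofReal (∫ x, f x * divg φ.1 x ∂μH[(Module.finrank ℝ V : ℝ)])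

/-- The total variation measure `|Df|` evaluated on an arbitrary set `B`
(by outer regularity: infimum over open neighbourhoods of `B`). -/
def varOn (f : V → ℝ) (B : Set V) : ℝ≥0∞ :=
  ⨅ U : {U : Set V // IsOpen U ∧ B ⊆ U}, varIn f U.1

/-- Total variation `V f` of `f`. -/
def totalVar (f : V → ℝ) : ℝ≥0∞ := varIn f Set.univ

/-- Perimeter of a set `A`: the total variation of its indicator function. -/
def Perim (A : Set V) : ℝ≥0∞ := totalVar (A.indicator (fun _ => (1 : ℝ)))

/-- `A` has locally finite perimeter: finite variation in every bounded open set. -/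
def HasLocFinPerimeter (A : Set V) : Prop :=
  ∀ U : Set V, IsOpen U → IsBounded U → varIn (A.indicator (fun _ => (1 : ℝ))) U < ⊤

/-- Variation of the projected derivative `D_L f = p_L ∘ Df` in a set `U`:
the test vector fields are constrained to take values in the subspace `L`. -/
def varInSub (f : V → ℝ) (L : Submodule ℝ V) (U : Set V) : ℝ≥0∞ :=
  ⨆ φ : {φ : V → V // ContDiff ℝ 1 φ ∧ HasCompactSupport φ ∧ tsupport φ ⊆ U ∧
      (∀ x, ‖φ x‖ ≤ 1) ∧ ∀ x, φ x ∈ L},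
    ENNReal.ofReal (∫ x, f x * divg φ.1 x ∂μH[(Module.finrank ℝ V : ℝ)])

/-- The total variation measure `|D_L f|` evaluated on an arbitrary set. -/
def varOnSub (f : V → ℝ) (L : Submodule ℝ V) (B : Set V) : ℝ≥0∞ :=
  ⨅ U : {U : Set V // IsOpen U ∧ B ⊆ U}, varInSub f L U.1


section Aux

variable (f : V → ℝ)

local notation "μ₀" => (μH[(Module.finrank ℝ V : ℝ)] : Measure V)

abbrev TestOn (U : Set V) : Type _ :=
  {φ : V → V // ContDiff ℝ 1 φ ∧ HasCompactSupport φ ∧ tsupport φ ⊆ U ∧ ∀ x, ‖φ x‖ ≤ 1}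

instance testOn_nonempty (U : Set V) : Nonempty (TestOn (V := V) U) := by
  refine ⟨⟨0, contDiff_const, ?_, ?_, fun x => by simp⟩⟩
  · simpa [HasCompactSupport, tsupport] using isCompact_empty
  · simp [tsupport]

lemma varIn_eq (U : Set V) :
    varIn f U = ⨆ φ : TestOn (V := V) U,
      ENNReal.ofReal (∫ x, f x * divg φ.1 x ∂μ₀) := rfl

lemma varIn_mono {U U' : Set V} (h : U ⊆ U') : varIn f U ≤ varIn f U' := by
  rw [varIn_eq, varIn_eq]
  exact iSup_le fun φ =>
    le_iSup_of_le ⟨φ.1, φ.2.1, φ.2.2.1, φ.2.2.2.1.trans h, φ.2.2.2.2⟩ le_rfl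

lemma divg_zero_fun : divg (fun _ : V => (0 : V)) = fun _ => 0 := by
  funext x
  simp [divg, fderiv_fun_const]

lemma varIn_empty : varIn f (∅ : Set V) = 0 := by
  rw [varIn_eq]
  refine le_antisymm (iSup_le fun φ => ?_) zero_le
  have hφ0 : φ.1 = fun _ => 0 := by
    funext x
    by_contra hx
    have : x ∈ tsupport φ.1 := subset_closure (by simpa [Function.support] using hx)
    exact absurd (φ.2.2.2.1 this) (Set.notMem_empty x)
  rw [hφ0, divg_zero_fun]
  simp

lemma varOn_le_varIn {B U : Set V} (hU : IsOpen U) (hBU : B ⊆ U) :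
    varOn f B ≤ varIn f U :=
  iInf_le (fun U : {U : Set V // IsOpen U ∧ B ⊆ U} => varIn f U.1) ⟨U, hU, hBU⟩

lemma varOn_mono {B B' : Set V} (h : B ⊆ B') : varOn f B ≤ varOn f B' :=
  le_iInf fun U => varOn_le_varIn f U.2.1 (h.trans U.2.2)

lemma varOn_empty : varOn f (∅ : Set V) = 0 :=
  le_antisymm ((varOn_le_varIn f isOpen_empty subset_rfl).trans_eq (varIn_empty f)) zero_le

end Aux

section Aux2

set_option linter.unusedSectionVars false

local notation "μ₀" => (μH[(Module.finrank ℝ V : ℝ)] : Measure V)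

lemma divg_continuous {φ : V → V} (hφ : ContDiff ℝ 1 φ) : Continuous (divg φ) := by
  refine continuous_finset_sum _ fun i _ => ?_
  exact ((hφ.continuous_fderiv one_ne_zero).clm_apply continuous_const).inner continuous_const

lemma divg_eq_zero_of_not_mem_tsupport {φ : V → V} {x : V} (hx : x ∉ tsupport φ) :
    divg φ x = 0 := by
  have h0 : fderiv ℝ φ x = 0 := by
    have hev : φ =ᶠ[nhds x] (fun _ => 0) := by
      refine Filter.eventuallyEq_iff_exists_mem.2 ⟨(tsupport φ)ᶜ, ?_, fun y hy => ?_⟩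
      · exact (isClosed_tsupport φ).isOpen_compl.mem_nhds hx
      · exact image_eq_zero_of_notMem_tsupport hy
    rw [hev.fderiv_eq]
    exact fderiv_const_apply 0
  simp [divg, h0]

lemma divg_hasCompactSupport {φ : V → V} (hφ : HasCompactSupport φ) :
    HasCompactSupport (divg φ) :=
  HasCompactSupport.intro hφ fun _ hx => divg_eq_zero_of_not_mem_tsupport hx

lemma integrable_mul_divg {f : V → ℝ} (hf : Measurable f) (hb : ∀ x, ‖f x‖ ≤ 1)
    {φ : V → V} (hφ : ContDiff ℝ 1 φ) (hφc : HasCompactSupport φ) :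
    Integrable (fun x => f x * divg φ x) μ₀ := by
  have hint : Integrable (divg φ) μ₀ :=
    (divg_continuous hφ).integrable_of_hasCompactSupport (divg_hasCompactSupport hφc)
  exact hint.bdd_mul hf.aestronglyMeasurable (Filter.Eventually.of_forall hb)

lemma divg_add {φ ψ : V → V} (hφ : ContDiff ℝ 1 φ) (hψ : ContDiff ℝ 1 ψ) (x : V) :
    divg (φ + ψ) x = divg φ x + divg ψ x := by
  unfold divg
  rw [← Finset.sum_add_distrib]
  refine Finset.sum_congr rfl fun i _ => ?_
  have : fderiv ℝ (φ + ψ) x = fderiv ℝ φ x + fderiv ℝ ψ x := by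
    have h := fderiv_add (𝕜 := ℝ) (x := x)
      (hφ.differentiable one_ne_zero).differentiableAt (hψ.differentiable one_ne_zero).differentiableAt
    convert h using 2
  rw [this]
  simp [inner_add_left]

end Aux2

section Aux3

set_option linter.unusedSectionVars false

local notation "μ₀" => (μH[(Module.finrank ℝ V : ℝ)] : Measure V)

lemma ofReal_le_varIn {U : Set V} (f : V → ℝ) {φ : V → V} (h1 : ContDiff ℝ 1 φ)
    (h2 : HasCompactSupport φ) (h3 : tsupport φ ⊆ U) (h4 : ∀ x, ‖φ x‖ ≤ 1) :
    ENNReal.ofReal (∫ x, f x * divg φ x ∂μ₀) ≤ varIn f U :=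
  le_iSup (fun ψ : TestOn (V := V) U =>
    ENNReal.ofReal (∫ x, f x * divg ψ.1 x ∂μ₀)) ⟨φ, h1, h2, h3, h4⟩

lemma varIn_add_varIn_le {f : V → ℝ} (hf : Measurable f) (hb : ∀ x, ‖f x‖ ≤ 1)
    {U₁ U₂ U : Set V} (hd : Disjoint U₁ U₂)
    (h1 : U₁ ⊆ U) (h2 : U₂ ⊆ U) :
    varIn f U₁ + varIn f U₂ ≤ varIn f U := by
  rw [varIn_eq f U₁, varIn_eq f U₂]
  refine ENNReal.iSup_add_iSup_le fun φ₁ φ₂ => ?_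
  obtain ⟨ψ₁, hψ₁, hψc₁, hψs₁, hψb₁⟩ := φ₁
  obtain ⟨ψ₂, hψ₂, hψc₂, hψs₂, hψb₂⟩ := φ₂
  simp only
  set I₁ := ∫ x, f x * divg ψ₁ x ∂μ₀ with hI₁
  set I₂ := ∫ x, f x * divg ψ₂ x ∂μ₀ with hI₂
  rcases le_or_gt I₁ 0 with h | hpos₁
  · rw [ENNReal.ofReal_of_nonpos h, zero_add]
    exact ofReal_le_varIn f hψ₂ hψc₂ (hψs₂.trans h2) hψb₂
  rcases le_or_gt I₂ 0 with h | hpos₂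
  · rw [ENNReal.ofReal_of_nonpos h, add_zero]
    exact ofReal_le_varIn f hψ₁ hψc₁ (hψs₁.trans h1) hψb₁
  -- both positive: use the sum as a test function
  have hz : ∀ x, ψ₁ x = 0 ∨ ψ₂ x = 0 := by
    intro x
    by_contra h
    push_neg at h
    have hx1 : x ∈ U₁ := hψs₁ (subset_closure (by simpa [Function.support] using h.1))
    have hx2 : x ∈ U₂ := hψs₂ (subset_closure (by simpa [Function.support] using h.2))
    exact (Set.disjoint_left.1 hd hx1) hx2
  have hsum : ENNReal.ofReal I₁ + ENNReal.ofReal I₂ = ENNReal.ofReal (I₁ + I₂) :=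
    (ENNReal.ofReal_add hpos₁.le hpos₂.le).symm
  rw [hsum]
  have hint : I₁ + I₂ = ∫ x, f x * divg (ψ₁ + ψ₂) x ∂μ₀ := by
    rw [hI₁, hI₂, ← integral_add (integrable_mul_divg hf hb hψ₁ hψc₁)
      (integrable_mul_divg hf hb hψ₂ hψc₂)]
    refine integral_congr_ae (Filter.Eventually.of_forall fun x => ?_)
    simp only [divg_add hψ₁ hψ₂, mul_add]
  rw [hint]
  refine ofReal_le_varIn f (hψ₁.add hψ₂) (hψc₁.add hψc₂) ?_ ?_
  · refine (tsupport_add ψ₁ ψ₂).trans ?_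
    exact Set.union_subset (hψs₁.trans h1) (hψs₂.trans h2)
  · intro x
    rcases hz x with h | h <;> simp only [Pi.add_apply, h, zero_add, add_zero]
    · exact hψb₂ x
    · exact hψb₁ x

end Aux3

section Aux4

set_option linter.unusedSectionVars false
set_option maxHeartbeats 1000000

local notation "μ₀" => (μH[(Module.finrank ℝ V : ℝ)] : Measure V)

lemma divg_finset_sum {ι : Type*} (t : Finset ι) (ψ : ι → V → V) (x : V)
    (h : ∀ i ∈ t, DifferentiableAt ℝ (ψ i) x) :
    divg (fun y => ∑ i ∈ t, ψ i y) x = ∑ i ∈ t, divg (ψ i) x := by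
  unfold divg
  have hfd : fderiv ℝ (fun y => ∑ i ∈ t, ψ i y) x = ∑ i ∈ t, fderiv ℝ (ψ i) x :=
    fderiv_fun_sum h
  rw [hfd, Finset.sum_comm]
  refine Finset.sum_congr rfl fun j _ => ?_
  rw [ContinuousLinearMap.sum_apply, sum_inner]

lemma ofReal_finset_sum_le {ι : Type*} (t : Finset ι) (a : ι → ℝ) :
    ENNReal.ofReal (∑ i ∈ t, a i) ≤ ∑ i ∈ t, ENNReal.ofReal (a i) := by
  classical
  induction t using Finset.induction_on with
  | empty => simp
  | insert _ _ hx ih =>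
    rw [Finset.sum_insert hx, Finset.sum_insert hx]
    exact (ENNReal.ofReal_add_le).trans (add_le_add le_rfl ih)

lemma varIn_iUnion_le {ι : Type*} [Countable ι] {f : V → ℝ}
    (hf : Measurable f) (hb : ∀ x, ‖f x‖ ≤ 1)
    (U : ι → Set V) (hU : ∀ i, IsOpen (U i)) :
    varIn f (⋃ i, U i) ≤ ∑' i, varIn f (U i) := by
  classical
  rw [varIn_eq]
  refine iSup_le fun φ => ?_
  obtain ⟨φ, hφ1, hφ2, hφ3, hφ4⟩ := φ
  simp only
  -- smooth partition of unity subordinate to U on tsupport φ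
  obtain ⟨ρ, hρ⟩ := SmoothPartitionOfUnity.exists_isSubordinate (modelWithCornersSelf ℝ V)
    (isClosed_tsupport φ) U hU hφ3
  have hfin : {i | (Function.support (ρ i) ∩ tsupport φ).Nonempty}.Finite :=
    ρ.locallyFinite.finite_nonempty_inter_compact hφ2
  set t : Finset ι := hfin.toFinset with ht
  set ψ : ι → V → V := fun i x => ρ i x • φ x with hψ
  have hψ1 : ∀ i, ContDiff ℝ 1 (ψ i) := by
    intro i
    have h1 : ContDiff ℝ 1 (fun x => ρ i x) := by
      have := (ρ i).contMDiff
      rw [contMDiff_iff_contDiff] at this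
      exact this.of_le (by exact_mod_cast (le_top : (1:ℕ∞) ≤ ⊤))
    exact h1.smul hφ1
  have hψkey : ∀ x, φ x = ∑ i ∈ t, ψ i x := by
    intro x
    by_cases hx : φ x = 0
    · simp [hψ, hx]
    · have hxs : x ∈ tsupport φ := subset_closure (by simpa [Function.support] using hx)
      have hsum1 : ∑ᶠ i, ρ i x = 1 := ρ.sum_eq_one hxs
      have hsupp : (Function.support fun i => ρ i x) ⊆ ↑t := by
        intro i hi
        rw [ht, Finset.mem_coe, Set.Finite.mem_toFinset]
        exact ⟨x, by simpa [Function.support] using hi, hxs⟩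
      have : ∑ᶠ i, ρ i x = ∑ i ∈ t, ρ i x :=
        finsum_eq_sum_of_support_subset _ hsupp
      rw [this] at hsum1
      calc φ x = (∑ i ∈ t, ρ i x) • φ x := by rw [hsum1, one_smul]
        _ = ∑ i ∈ t, ψ i x := by rw [Finset.sum_smul]
  have hψc : ∀ i, HasCompactSupport (ψ i) := by
    intro i
    refine HasCompactSupport.intro hφ2 fun x hx => ?_
    have : φ x = 0 := image_eq_zero_of_notMem_tsupport hx
    simp [hψ, this]
  have hψs : ∀ i, tsupport (ψ i) ⊆ U i := by
    intro i
    have hsub : Function.support (ψ i) ⊆ tsupport (ρ i) := by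
      intro x hx
      simp only [hψ, Function.mem_support, ne_eq] at hx
      have hne : ρ i x ≠ 0 := fun h => hx (by simp [h])
      exact subset_closure (by simpa [Function.support] using hne)
    exact (closure_minimal hsub (isClosed_tsupport _)).trans (hρ i)
  have hψb : ∀ i x, ‖ψ i x‖ ≤ 1 := by
    intro i x
    rw [hψ]
    simp only [norm_smul, Real.norm_eq_abs, abs_of_nonneg (ρ.nonneg i x)]
    calc ρ i x * ‖φ x‖ ≤ 1 * 1 :=
      mul_le_mul (ρ.le_one i x) (hφ4 x) (norm_nonneg _) zero_le_one
    _ = 1 := one_mul 1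
  -- split the integral
  have hdiv : ∀ x, divg φ x = ∑ i ∈ t, divg (ψ i) x := by
    intro x
    have hfun : φ = fun y => ∑ i ∈ t, ψ i y := funext hψkey
    calc divg φ x = divg (fun y => ∑ i ∈ t, ψ i y) x := by rw [← hfun]
      _ = ∑ i ∈ t, divg (ψ i) x := divg_finset_sum t ψ x fun i _ =>
          ((hψ1 i).differentiable one_ne_zero).differentiableAt
  have hint : (∫ x, f x * divg φ x ∂μ₀) = ∑ i ∈ t, ∫ x, f x * divg (ψ i) x ∂μ₀ := by
    rw [← integral_finset_sum t fun i _ => integrable_mul_divg hf hb (hψ1 i) (hψc i)]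
    refine integral_congr_ae (Filter.Eventually.of_forall fun x => ?_)
    simp only [hdiv x, Finset.mul_sum]
  rw [hint]
  calc ENNReal.ofReal (∑ i ∈ t, ∫ x, f x * divg (ψ i) x ∂μ₀)
      ≤ ∑ i ∈ t, ENNReal.ofReal (∫ x, f x * divg (ψ i) x ∂μ₀) :=
        ofReal_finset_sum_le t _
    _ ≤ ∑ i ∈ t, varIn f (U i) := Finset.sum_le_sum fun i _ =>
        ofReal_le_varIn f (hψ1 i) (hψc i) (hψs i) (hψb i)
    _ ≤ ∑' i, varIn f (U i) := ENNReal.sum_le_tsum t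

end Aux4

section Aux5

set_option linter.unusedSectionVars false
set_option maxHeartbeats 1000000

variable {f : V → ℝ}

lemma varOn_iUnion_le (hf : Measurable f) (hb : ∀ x, ‖f x‖ ≤ 1)
    (B : ℕ → Set V) : varOn f (⋃ n, B n) ≤ ∑' n, varOn f (B n) := by
  refine ENNReal.le_of_forall_pos_le_add fun ε hε hfin => ?_
  obtain ⟨δ, hδpos, hδsum⟩ :=
    ENNReal.exists_pos_sum_of_countable' (ε := (ε : ℝ≥0∞)) (by exact_mod_cast hε.ne') ℕ
  have hch : ∀ n, ∃ U : Set V, IsOpen U ∧ B n ⊆ U ∧ varIn f U ≤ varOn f (B n) + δ n := by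
    intro n
    have hlt : varOn f (B n) < varOn f (B n) + δ n := by
      refine ENNReal.lt_add_right ?_ (hδpos n).ne'
      exact ((ENNReal.le_tsum n).trans_lt hfin).ne
    rw [varOn] at hlt
    obtain ⟨⟨U, hU1, hU2⟩, hU3⟩ := iInf_lt_iff.mp hlt
    exact ⟨U, hU1, hU2, hU3.le⟩
  choose U hU1 hU2 hU3 using hch
  calc varOn f (⋃ n, B n)
      ≤ varIn f (⋃ n, U n) :=
        varOn_le_varIn f (isOpen_iUnion hU1) (Set.iUnion_mono hU2)
    _ ≤ ∑' n, varIn f (U n) := varIn_iUnion_le hf hb U hU1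
    _ ≤ ∑' n, (varOn f (B n) + δ n) := ENNReal.tsum_le_tsum hU3
    _ = (∑' n, varOn f (B n)) + ∑' n, δ n := ENNReal.tsum_add
    _ ≤ (∑' n, varOn f (B n)) + ε := add_le_add le_rfl hδsum.le

/-- The total variation as an outer measure. -/
def varOM (f : V → ℝ) (hf : Measurable f) (hb : ∀ x, ‖f x‖ ≤ 1) :
    MeasureTheory.OuterMeasure V where
  measureOf := varOn f
  empty := varOn_empty f
  mono h := varOn_mono f h
  iUnion_nat B _ := varOn_iUnion_le hf hb B

lemma varOM_isMetric (hf : Measurable f) (hb : ∀ x, ‖f x‖ ≤ 1) :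
    MeasureTheory.OuterMeasure.IsMetric (varOM f hf hb) := by
  intro s t hst
  obtain ⟨r, hr0, hr⟩ := hst
  refine le_antisymm ?_ ?_
  · -- subadditivity
    have h0 := varOn_iUnion_le hf hb (fun n => if n = 0 then s else if n = 1 then t else ∅)
    have h1 : (⋃ n, (if n = 0 then s else if n = 1 then t else ∅ : Set V)) = s ∪ t := by
      apply Set.Subset.antisymm
      · refine Set.iUnion_subset fun n => ?_
        rcases n with _ | n
        · simp
        · rcases n with _ | n <;> simp
      · refine Set.union_subset ?_ ?_
        · exact Set.subset_iUnion_of_subset 0 (by simp)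
        · exact Set.subset_iUnion_of_subset 1 (by simp)
    have h2 : (∑' n, varOn f (if n = 0 then s else if n = 1 then t else ∅ : Set V))
        = varOn f s + varOn f t := by
      rw [tsum_eq_sum (s := {0, 1}) ?_]
      · simp [Finset.sum_pair]
      · intro n hn
        have hn0 : n ≠ 0 := fun h => hn (by simp [h])
        have hn1 : n ≠ 1 := fun h => hn (by simp [h])
        simp [hn0, hn1, varOn_empty]
    rw [h1, h2] at h0
    exact h0
  · -- superadditivity using separation
    show varOn f s + varOn f t ≤ varOn f (s ∪ t)
    refine le_iInf fun W => ?_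
    obtain ⟨W, hWopen, hWsub⟩ := W
    set S₁ : Set V := ⋃ x ∈ s, EMetric.ball x (r / 2) with hS₁
    set S₂ : Set V := ⋃ x ∈ t, EMetric.ball x (r / 2) with hS₂
    have hS₁o : IsOpen S₁ := isOpen_biUnion fun _ _ => EMetric.isOpen_ball
    have hS₂o : IsOpen S₂ := isOpen_biUnion fun _ _ => EMetric.isOpen_ball
    have hr2 : 0 < r / 2 := ENNReal.div_pos hr0 ENNReal.ofNat_ne_top
    have hsS₁ : s ⊆ S₁ := fun x hx => Set.mem_biUnion hx (EMetric.mem_ball_self hr2)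
    have htS₂ : t ⊆ S₂ := fun x hx => Set.mem_biUnion hx (EMetric.mem_ball_self hr2)
    have hdisj : Disjoint S₁ S₂ := by
      rw [Set.disjoint_left]
      rintro y hy1 hy2
      obtain ⟨x₁, hx₁, hyx₁⟩ := Set.mem_iUnion₂.mp hy1
      obtain ⟨x₂, hx₂, hyx₂⟩ := Set.mem_iUnion₂.mp hy2
      have : edist x₁ x₂ < r := by
        calc edist x₁ x₂ ≤ edist x₁ y + edist y x₂ := edist_triangle _ _ _
          _ < r / 2 + r / 2 := by
              refine ENNReal.add_lt_add ?_ (EMetric.mem_ball.mp hyx₂)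
              rw [edist_comm]
              exact EMetric.mem_ball.mp hyx₁
          _ = r := ENNReal.add_halves r
      exact absurd (hr x₁ hx₁ x₂ hx₂) (not_le.mpr this)
    calc varOn f s + varOn f t
        ≤ varIn f (W ∩ S₁) + varIn f (W ∩ S₂) := by
          refine add_le_add ?_ ?_
          · exact varOn_le_varIn f (hWopen.inter hS₁o)
              (Set.subset_inter ((Set.subset_union_left).trans hWsub) hsS₁)
          · exact varOn_le_varIn f (hWopen.inter hS₂o)
              (Set.subset_inter ((Set.subset_union_right).trans hWsub) htS₂)
      _ ≤ varIn f W := varIn_add_varIn_le hf hb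
          (hdisj.mono Set.inter_subset_right Set.inter_subset_right)
          Set.inter_subset_left Set.inter_subset_left

lemma varOn_iUnion_disjoint (hf : Measurable f) (hb : ∀ x, ‖f x‖ ≤ 1)
    {B : ℕ → Set V} (hB : ∀ n, MeasurableSet (B n)) (hd : Pairwise (Function.onFun Disjoint B)) :
    varOn f (⋃ n, B n) = ∑' n, varOn f (B n) := by
  have hcar := (varOM_isMetric (f := f) hf hb).borel_le_caratheodory
  have h := MeasureTheory.OuterMeasure.iUnion_eq_of_caratheodory
    (m := varOM f hf hb) (s := B) (fun n => hcar _ (by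
      rw [← BorelSpace.measurable_eq (α := V)]
      exact hB n)) hd
  exact h

end Aux5

section Aux6

set_option linter.unusedSectionVars false
set_option maxHeartbeats 1000000

local notation "μ₀" => (μH[(Module.finrank ℝ V : ℝ)] : Measure V)

lemma divg_comp_add {φ : V → V} (hφ : ContDiff ℝ 1 φ) (z x : V) :
    divg (fun y => φ (y + z)) x = divg φ (x + z) := by
  have hd : DifferentiableAt ℝ φ (x + z) := (hφ.differentiable one_ne_zero).differentiableAt
  have hcomp : HasFDerivAt (fun y => φ (y + z)) (fderiv ℝ φ (x + z)) x := by
    have h1 : HasFDerivAt φ (fderiv ℝ φ (x + z)) (x + z) := hd.hasFDerivAt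
    have h2 : HasFDerivAt (fun y : V => y + z) (ContinuousLinearMap.id ℝ V) x :=
      (hasFDerivAt_id x).add_const z
    simpa [Function.comp_def] using h1.comp x h2
  rw [divg, divg, hcomp.fderiv]

lemma measure_theory_map_add_left (z : V) :
    Measure.map (fun x : V => z + x) μ₀ = μ₀ :=
  MeasureTheory.map_add_left_eq_self μ₀ z

lemma map_add_right_eq_self (z : V) :
    Measure.map (fun x : V => x + z) μ₀ = μ₀ := by
  have h : (fun x : V => x + z) = (fun x : V => z + x) := funext fun x => add_comm x z
  rw [h]
  exact measure_theory_map_add_left z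

lemma measurePreserving_add_right' (z : V) :
    MeasurePreserving (fun x : V => x + z) μ₀ μ₀ :=
  ⟨measurable_add_const z, map_add_right_eq_self z⟩

lemma varIn_comp_add_le (f : V → ℝ) (z : V) (U : Set V) :
    varIn (fun x => f (x + z)) ((fun x => x + z) ⁻¹' U) ≤ varIn f U := by
  rw [varIn_eq, varIn_eq]
  refine iSup_le fun φ => ?_
  obtain ⟨φ, hφ1, hφ2, hφ3, hφ4⟩ := φ
  simp only
  set ψ : V → V := fun x => φ (x + -z) with hψdef
  have hψ1 : ContDiff ℝ 1 ψ := hφ1.comp (contDiff_id.add contDiff_const)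
  have hts : tsupport ψ ⊆ {x : V | x + -z ∈ tsupport φ} := by
    refine closure_minimal ?_ ((isClosed_tsupport φ).preimage (continuous_add_right (-z)))
    intro x hx
    exact subset_closure (by simpa [Function.support, hψdef] using hx)
  have hψ2 : HasCompactSupport ψ := by
    have himg : IsCompact ((fun y : V => y + z) '' tsupport φ) :=
      hφ2.image (continuous_add_right z)
    refine IsCompact.of_isClosed_subset himg (isClosed_tsupport ψ) ?_
    intro x hx
    exact ⟨x + -z, hts hx, by simp [add_assoc]⟩
  have hψ3 : tsupport ψ ⊆ U := by
    intro x hx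
    have h1 : x + -z ∈ (fun x => x + z) ⁻¹' U := hφ3 (hts hx)
    simpa [add_assoc] using h1
  have hψ4 : ∀ x, ‖ψ x‖ ≤ 1 := fun x => hφ4 _
  have hdiv : ∀ x, divg φ x = divg ψ (x + z) := by
    intro x
    have := divg_comp_add hψ1 z x  -- divg (fun y => ψ (y + z)) x = divg ψ (x + z)
    rw [← this]
    congr 1
    funext y
    simp [hψdef, add_assoc]
  have hint : (∫ x, f (x + z) * divg φ x ∂μ₀) = ∫ x, f x * divg ψ x ∂μ₀ := by
    have hmp := measurePreserving_add_right' (V := V) z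
    have hcomp := hmp.integral_comp (MeasurableEquiv.addRight z).measurableEmbedding
      (fun y => f y * divg ψ y)
    calc (∫ x, f (x + z) * divg φ x ∂μ₀)
        = ∫ x, f (x + z) * divg ψ (x + z) ∂μ₀ := by
          refine integral_congr_ae (Filter.Eventually.of_forall fun x => ?_)
          simp only [hdiv x]
      _ = ∫ x, f x * divg ψ x ∂μ₀ := hcomp
  rw [hint]
  exact ofReal_le_varIn f hψ1 hψ2 hψ3 hψ4

lemma varIn_comp_add (f : V → ℝ) (z : V) (U : Set V) :
    varIn (fun x => f (x + z)) ((fun x => x + z) ⁻¹' U) = varIn f U := by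
  refine le_antisymm (varIn_comp_add_le f z U) ?_
  have h := varIn_comp_add_le (fun x => f (x + z)) (-z)
    ((fun x : V => x + z) ⁻¹' U)
  have h1 : (fun x : V => f (x + -z + z)) = f := funext fun x => by simp [add_assoc]
  have h2 : ((fun x : V => x + -z) ⁻¹' ((fun x : V => x + z) ⁻¹' U)) = U := by
    ext x; simp [add_assoc]
  rw [h1, h2] at h
  exact h

lemma varOn_comp_add_le (f : V → ℝ) (z : V) (B : Set V) :
    varOn (fun x => f (x + z)) ((fun x => x + z) ⁻¹' B) ≤ varOn f B := by
  refine le_iInf fun U => ?_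
  obtain ⟨U, hU1, hU2⟩ := U
  refine le_trans ?_ (varIn_comp_add f z U).le
  exact varOn_le_varIn _ (hU1.preimage (continuous_add_right z)) (Set.preimage_mono hU2)

lemma varOn_comp_add (f : V → ℝ) (z : V) (B : Set V) :
    varOn (fun x => f (x + z)) ((fun x => x + z) ⁻¹' B) = varOn f B := by
  refine le_antisymm (varOn_comp_add_le f z B) ?_
  have h := varOn_comp_add_le (fun x => f (x + z)) (-z) ((fun x : V => x + z) ⁻¹' B)
  have h1 : (fun x : V => f (x + -z + z)) = f := funext fun x => by simp [add_assoc]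
  have h2 : ((fun x : V => x + -z) ⁻¹' ((fun x : V => x + z) ⁻¹' B)) = B := by
    ext x; simp [add_assoc]
  rw [h1, h2] at h
  exact h

end Aux6
/-- Let `X` be a stationary random set with locally finite perimeter such
that `B ↦ E|D1_X|(B)` is locally finite. Then `E|D1_X|` is a translation-invariant locally
finite measure and hence equals `c · H^d` for a finite constant `c = \bar P(X)` (the
specific perimeter). -/

theorem statement19 {d : ℕ} {Ω : Type*} [MeasurableSpace Ω] (P : Measure Ω)
    [IsProbabilityMeasure P] [mS : MeasurableSpace (Set (EuclideanSpace ℝ (Fin d)))]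
    (X : Ω → Set (EuclideanSpace ℝ (Fin d))) (hX : Measurable X)
    (hXm : ∀ ω, MeasurableSet (X ω))
    (hXloc : ∀ ω, HasLocFinPerimeter (X ω))
    (hvar : ∀ B : Set (EuclideanSpace ℝ (Fin d)), MeasurableSet B →
      Measurable fun A : Set (EuclideanSpace ℝ (Fin d)) =>
        varOn (A.indicator (fun _ => (1 : ℝ))) B)
    (hstat : ∀ z : EuclideanSpace ℝ (Fin d),
      Measure.map (fun ω => (fun x => x + z) ⁻¹' X ω) P = Measure.map X P)
    (hEloc : ∀ K : Set (EuclideanSpace ℝ (Fin d)), IsCompact K →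
      ∫⁻ ω, varOn ((X ω).indicator (fun _ => (1 : ℝ))) K ∂P < ⊤) :
    (∀ z : EuclideanSpace ℝ (Fin d), ∀ B : Set (EuclideanSpace ℝ (Fin d)), MeasurableSet B →
        ∫⁻ ω, varOn ((X ω).indicator (fun _ => (1 : ℝ))) ((fun x => x + z) ⁻¹' B) ∂P
          = ∫⁻ ω, varOn ((X ω).indicator (fun _ => (1 : ℝ))) B ∂P) ∧
    ∃ c : ℝ≥0∞, c < ⊤ ∧ ∀ B : Set (EuclideanSpace ℝ (Fin d)), MeasurableSet B →
      ∫⁻ ω, varOn ((X ω).indicator (fun _ => (1 : ℝ))) B ∂P = c * volume B := by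
  have hmeas : ∀ ω, Measurable ((X ω).indicator (fun _ => (1 : ℝ))) := fun ω =>
    (measurable_const.indicator (hXm ω))
  have hbd : ∀ ω x, ‖(X ω).indicator (fun _ => (1 : ℝ)) x‖ ≤ 1 := by
    intro ω x
    by_cases hx : x ∈ X ω <;> simp [Set.indicator, hx]
  -- translation invariance of the expected variation
  have hinv : ∀ z : (EuclideanSpace ℝ (Fin d)), ∀ B : Set (EuclideanSpace ℝ (Fin d)), MeasurableSet B →
      ∫⁻ ω, varOn ((X ω).indicator (fun _ => (1 : ℝ))) ((fun x => x + z) ⁻¹' B) ∂P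
        = ∫⁻ ω, varOn ((X ω).indicator (fun _ => (1 : ℝ))) B ∂P := by
    intro z B hB
    have hTB : MeasurableSet ((fun x : (EuclideanSpace ℝ (Fin d)) => x + z) ⁻¹' B) :=
      hB.preimage (measurable_add_const z)
    set g : Set (EuclideanSpace ℝ (Fin d)) → ℝ≥0∞ :=
      fun A => varOn (A.indicator fun _ => (1 : ℝ)) ((fun x : (EuclideanSpace ℝ (Fin d)) => x + z) ⁻¹' B) with hg_def
    have hg : Measurable g := hvar _ hTB
    have hYae : AEMeasurable (fun ω => (fun x : (EuclideanSpace ℝ (Fin d)) => x + z) ⁻¹' X ω) P := by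
      by_contra h
      have h0 := Measure.map_of_not_aemeasurable h
      rw [hstat z] at h0
      have h1 : (Measure.map X P) Set.univ = 1 := by
        rw [Measure.map_apply hX MeasurableSet.univ]
        simp
      rw [h0] at h1
      simp at h1
    calc ∫⁻ ω, varOn ((X ω).indicator (fun _ => (1 : ℝ))) ((fun x => x + z) ⁻¹' B) ∂P
        = ∫⁻ A, g A ∂(Measure.map X P) := (lintegral_map hg hX).symm
      _ = ∫⁻ A, g A ∂(Measure.map (fun ω => (fun x : (EuclideanSpace ℝ (Fin d)) => x + z) ⁻¹' X ω) P) := by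
          rw [hstat z]
      _ = ∫⁻ ω, g ((fun x : (EuclideanSpace ℝ (Fin d)) => x + z) ⁻¹' X ω) ∂P :=
          lintegral_map' hg.aemeasurable hYae
      _ = ∫⁻ ω, varOn ((X ω).indicator (fun _ => (1 : ℝ))) B ∂P := by
          refine lintegral_congr fun ω => ?_
          have hrw : ((fun x : (EuclideanSpace ℝ (Fin d)) => x + z) ⁻¹' X ω).indicator (fun _ => (1 : ℝ))
              = fun x => (X ω).indicator (fun _ => (1 : ℝ)) (x + z) := by
            funext x
            by_cases hx : x + z ∈ X ω <;> simp [Set.indicator, hx]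
          rw [hg_def]
          simp only
          rw [hrw, varOn_comp_add]
  refine ⟨hinv, ?_⟩
  -- build the expectation measure
  set m : ∀ B : Set (EuclideanSpace ℝ (Fin d)), MeasurableSet B → ℝ≥0∞ :=
    fun B _ => ∫⁻ ω, varOn ((X ω).indicator (fun _ => (1 : ℝ))) B ∂P with hm_def
  have hm0 : m ∅ MeasurableSet.empty = 0 := by
    simp [hm_def, varOn_empty]
  have hmU : ∀ ⦃Bs : ℕ → Set (EuclideanSpace ℝ (Fin d))⦄ (h : ∀ i, MeasurableSet (Bs i)),
      Pairwise (Function.onFun Disjoint Bs) →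
      m (⋃ i, Bs i) (MeasurableSet.iUnion h) = ∑' i, m (Bs i) (h i) := by
    intro Bs hBs hd
    simp only [hm_def]
    have hpt : ∀ ω, varOn ((X ω).indicator (fun _ => (1 : ℝ))) (⋃ i, Bs i)
        = ∑' i, varOn ((X ω).indicator (fun _ => (1 : ℝ))) (Bs i) := fun ω =>
      varOn_iUnion_disjoint (hmeas ω) (hbd ω) hBs hd
    simp_rw [hpt]
    exact lintegral_tsum fun n => ((hvar (Bs n) (hBs n)).comp hX).aemeasurable
  set M : Measure (EuclideanSpace ℝ (Fin d)) := Measure.ofMeasurable m hm0 hmU with hM_def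
  have hM : ∀ B : Set (EuclideanSpace ℝ (Fin d)), ∀ hB : MeasurableSet B,
      M B = ∫⁻ ω, varOn ((X ω).indicator (fun _ => (1 : ℝ))) B ∂P := fun B hB =>
    Measure.ofMeasurable_apply B hB
  haveI hMfin : IsFiniteMeasureOnCompacts M := by
    refine ⟨fun K hK => ?_⟩
    rw [hM K hK.measurableSet]
    exact hEloc K hK
  haveI hMinv : M.IsAddLeftInvariant := by
    refine ⟨fun z => ?_⟩
    ext B hB
    rw [Measure.map_apply (measurable_const_add z) hB]
    have hpre : (fun x : (EuclideanSpace ℝ (Fin d)) => z + x) ⁻¹' B = (fun x : (EuclideanSpace ℝ (Fin d)) => x + z) ⁻¹' B := by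
      ext x; simp [add_comm]
    rw [hpre, hM _ (hB.preimage (measurable_add_const z)), hM _ hB]
    exact hinv z B hB
  have heq := Measure.isAddLeftInvariant_eq_smul M (volume : Measure (EuclideanSpace ℝ (Fin d)))
  refine ⟨(Measure.addHaarScalarFactor M (volume : Measure (EuclideanSpace ℝ (Fin d))) : ℝ≥0∞),
    ENNReal.coe_lt_top, fun B hB => ?_⟩
  rw [← hM B hB]
  have hBval : M B = (M.addHaarScalarFactor volume • (volume : Measure (EuclideanSpace ℝ (Fin d)))) B := by
    rw [← heq]
  rw [hBval]
  rw [Measure.smul_apply, ENNReal.smul_def, smul_eq_mul]
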